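/- Let x : [0, Δ∞) → ℝⁿ be piecewise C¹ with Δ∞ < ∞ and ∫₀^{Δ∞} |ẋ(s)|² ds = ∞. Then for every R > 0 and K > 0, A_Δ − K|x(Δ)|² → +∞ as Δ → Δ∞, where A_Δ = ∫₀^Δ |ẋ|² − R∫₀^Δ |x|². -/

import Mathlib

open MeasureTheory Filter

/-- Cauchy–Schwarz for nonnegative functions: `(∫ f)² ≤ (b-a) ∫ f²`. -/
lemma cs_aux {a b : ℝ} (hab : a ≤ b) {f : ℝ → ℝ} (hf : ∀ s, 0 ≤ f s)
    (h1 : IntervalIntegrable f volume a b)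
    (h2 : IntervalIntegrable (fun s => (f s)^2) volume a b) :
    (∫ s in a..b, f s)^2 ≤ (b - a) * ∫ s in a..b, (f s)^2 := by
  set I := ∫ s in a..b, f s with hI
  set E := ∫ s in a..b, (f s)^2 with hE
  have hI0 : 0 ≤ I := intervalIntegral.integral_nonneg hab (fun s _ => hf s)
  have hE0 : 0 ≤ E := intervalIntegral.integral_nonneg hab (fun s _ => sq_nonneg _)
  rcases hI0.eq_or_lt with h | h
  · rw [← h]
    have h' : 0 ≤ b - a := by linarith
    nlinarith [mul_nonneg h' hE0]
  · have hab' : a < b := by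
      rcases hab.eq_or_lt with rfl | h'
      · simp [hI, intervalIntegral.integral_same] at h
      · exact h'
    set c := I / (b - a) with hc
    have hba : (0:ℝ) < b - a := by linarith
    have hc0 : 0 < c := div_pos h hba
    have key : I ≤ (b - a) * (c/2) + E / (2*c) := by
      have step : I ≤ ∫ s in a..b, (c/2 + (f s)^2/(2*c)) := by
        apply intervalIntegral.integral_mono_on hab h1
          ((intervalIntegrable_const).add (h2.div_const _))
        intro s _
        have h2c : (0:ℝ) < 2*c := by linarith
        rw [← sub_nonneg]
        have heq : c/2 + (f s)^2/(2*c) - f s = (f s - c)^2 / (2*c) := by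
          field_simp; ring
        rw [heq]
        positivity
      rwa [intervalIntegral.integral_add intervalIntegrable_const (h2.div_const _),
        intervalIntegral.integral_const, intervalIntegral.integral_div, smul_eq_mul,
        ← hE] at step
    have hcI : c * (b - a) = I := by rw [hc]; exact div_mul_cancel₀ I hba.ne'
    have h2c : (0:ℝ) < 2*c := by linarith
    have key2 : 2*c*I ≤ (b-a)*c^2 + E := by
      calc 2*c*I ≤ 2*c*((b - a) * (c/2) + E / (2*c)) :=
            mul_le_mul_of_nonneg_left key h2c.le
        _ = (b-a)*c^2 + E := by field_simp
    have h3 : (b-a)*c^2 = c*I := by rw [← hcI]; ring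
    have h4 : c*I ≤ E := by linarith
    calc I^2 = (b-a)*(c*I) := by rw [← hcI]; ring
      _ ≤ (b-a)*E := mul_le_mul_of_nonneg_left h4 hba.le

set_option maxHeartbeats 1000000 in
/-- With `x` as in Statement 6 (finite interval, infinite energy),
for every `R > 0` and `K > 0`, `A_Δ − K|x(Δ)|²` tends to `+∞` as `Δ → Δ∞⁻`,
where `A_Δ = ∫₀^Δ|ẋ|² − R∫₀^Δ|x|²`. -/
theorem stmt_7 (n : ℕ) (Δinf : ℝ) (hΔinf : 0 < Δinf)
    (R K : ℝ) (hR : 0 < R) (hK : 0 < K)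
    (x x' : ℝ → EuclideanSpace ℝ (Fin n))
    (hx : ∀ t ∈ Set.Ico (0:ℝ) Δinf, x t = x 0 + ∫ s in (0:ℝ)..t, x' s)
    (hx'int : ∀ Δ ∈ Set.Ico (0:ℝ) Δinf, IntervalIntegrable x' volume 0 Δ)
    (hx'sq : ∀ Δ ∈ Set.Ico (0:ℝ) Δinf,
      IntervalIntegrable (fun s => ‖x' s‖^2) volume 0 Δ)
    (hdiv : Tendsto (fun Δ => ∫ s in (0:ℝ)..Δ, ‖x' s‖^2)
      (nhdsWithin Δinf (Set.Iio Δinf)) atTop) :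
    Tendsto (fun Δ =>
        (∫ s in (0:ℝ)..Δ, ‖x' s‖^2) - R * (∫ s in (0:ℝ)..Δ, ‖x s‖^2)
          - K * ‖x Δ‖^2)
      (nhdsWithin Δinf (Set.Iio Δinf)) atTop := by
  set E : ℝ → ℝ := fun Δ => ∫ s in (0:ℝ)..Δ, ‖x' s‖^2 with hEdef
  -- choose ε small
  set ε : ℝ := min (Δinf/2) (1/(4*(R*Δinf+K))) with hεdef
  have hRK : 0 < R*Δinf + K := by positivity
  have hεpos : 0 < ε := lt_min (by linarith) (by positivity)
  have hε1 : ε ≤ Δinf/2 := min_le_left _ _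
  have hε2 : ε ≤ 1/(4*(R*Δinf+K)) := min_le_right _ _
  set Δ₀ : ℝ := Δinf - ε with hΔ₀def
  have hΔ₀pos : 0 < Δ₀ := by simp only [hΔ₀def]; linarith
  have hΔ₀lt : Δ₀ < Δinf := by simp only [hΔ₀def]; linarith
  -- integrability of x' and ‖x'‖² on subintervals
  have hsub : ∀ a b : ℝ, 0 ≤ a → a ≤ b → b < Δinf →
      IntervalIntegrable x' volume a b ∧
      IntervalIntegrable (fun s => ‖x' s‖^2) volume a b := by
    intro a b ha hab hb
    have hmem : b ∈ Set.Ico (0:ℝ) Δinf := ⟨le_trans ha hab, hb⟩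
    have hss : Set.uIcc a b ⊆ Set.uIcc 0 b := by
      rw [Set.uIcc_of_le hab, Set.uIcc_of_le (le_trans ha hab)]
      exact Set.Icc_subset_Icc ha le_rfl
    exact ⟨(hx'int b hmem).mono_set hss, (hx'sq b hmem).mono_set hss⟩
  -- E is "additive": E b - E a = ∫_a^b
  have hadd : ∀ a b : ℝ, 0 ≤ a → a ≤ b → b < Δinf →
      (∫ s in a..b, ‖x' s‖^2) = E b - E a := by
    intro a b ha hab hb
    have h0a := (hsub 0 a le_rfl ha (lt_of_le_of_lt hab hb)).2
    have hab' := (hsub a b ha hab hb).2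
    have := intervalIntegral.integral_add_adjacent_intervals h0a hab'
    simp only [hEdef]
    linarith [this]
  have hmono : ∀ a b : ℝ, 0 ≤ a → a ≤ b → b < Δinf → E a ≤ E b := by
    intro a b ha hab hb
    have := hadd a b ha hab hb
    have hpos : 0 ≤ ∫ s in a..b, ‖x' s‖^2 :=
      intervalIntegral.integral_nonneg hab (fun s _ => sq_nonneg _)
    linarith
  have hE0 : E 0 = 0 := intervalIntegral.integral_same
  have hEnonneg : ∀ b : ℝ, 0 ≤ b → b < Δinf → 0 ≤ E b := by
    intro b hb hb'
    have := hmono 0 b le_rfl hb hb'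
    linarith
  -- continuity of x on compact subintervals
  have hxcont : ∀ A : ℝ, 0 ≤ A → A < Δinf → ContinuousOn x (Set.Icc 0 A) := by
    intro A hA0 hA
    have hint : IntervalIntegrable x' volume 0 A := hx'int A ⟨hA0, hA⟩
    have hF : ContinuousOn (fun t => ∫ s in (0:ℝ)..t, x' s) (Set.Icc 0 A) := by
      have := intervalIntegral.continuousOn_primitive_interval'
        hint (Set.left_mem_uIcc)
      rwa [Set.uIcc_of_le hA0] at this
    have : ContinuousOn (fun t => x 0 + ∫ s in (0:ℝ)..t, x' s) (Set.Icc 0 A) :=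
      continuousOn_const.add hF
    apply this.congr
    intro t ht
    exact hx t ⟨ht.1, lt_of_le_of_lt ht.2 hA⟩
  have hxsqint : ∀ A : ℝ, 0 ≤ A → A < Δinf →
      IntervalIntegrable (fun s => ‖x s‖^2) volume 0 A := by
    intro A hA0 hA
    have : ContinuousOn (fun s => ‖x s‖^2) (Set.Icc 0 A) :=
      ((hxcont A hA0 hA).norm).pow 2
    rw [intervalIntegrable_iff_integrableOn_Icc_of_le hA0]
    exact this.integrableOn_compact isCompact_Icc
  -- key pointwise bound
  set B : ℝ := 2*‖x Δ₀‖^2 with hBdef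
  have hkey : ∀ Δ : ℝ, Δ₀ ≤ Δ → Δ < Δinf → ∀ t, Δ₀ ≤ t → t ≤ Δ →
      ‖x t‖^2 ≤ B + 2*ε*(E Δ) := by
    intro Δ hΔ₀Δ hΔ t ht0 htΔ
    have htinf : t < Δinf := lt_of_le_of_lt htΔ hΔ
    have ht0' : 0 ≤ t := le_trans hΔ₀pos.le ht0
    -- x t - x Δ₀ = ∫_{Δ₀}^t x'
    have hxt := hx t ⟨ht0', htinf⟩
    have hxΔ₀ := hx Δ₀ ⟨hΔ₀pos.le, hΔ₀lt⟩
    have hadj := intervalIntegral.integral_add_adjacent_intervals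
      (hx'int Δ₀ ⟨hΔ₀pos.le, hΔ₀lt⟩)
      (hsub Δ₀ t hΔ₀pos.le ht0 htinf).1
    have hdiff : x t - x Δ₀ = ∫ s in Δ₀..t, x' s := by
      rw [hxt, hxΔ₀, ← hadj]; abel
    have hnorm1 : ‖x t - x Δ₀‖ ≤ ∫ s in Δ₀..t, ‖x' s‖ := by
      rw [hdiff]
      exact intervalIntegral.norm_integral_le_integral_norm ht0
    have hcs : (∫ s in Δ₀..t, ‖x' s‖)^2 ≤ (t - Δ₀) * ∫ s in Δ₀..t, ‖x' s‖^2 :=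
      cs_aux ht0 (fun s => norm_nonneg _)
        ((hsub Δ₀ t hΔ₀pos.le ht0 htinf).1.norm)
        (hsub Δ₀ t hΔ₀pos.le ht0 htinf).2
    have hEt : (∫ s in Δ₀..t, ‖x' s‖^2) = E t - E Δ₀ :=
      hadd Δ₀ t hΔ₀pos.le ht0 htinf
    have hEmono : E t ≤ E Δ := hmono t Δ ht0' htΔ hΔ
    have hEΔ₀nn : 0 ≤ E Δ₀ := hEnonneg Δ₀ hΔ₀pos.le hΔ₀lt
    have htε : t - Δ₀ ≤ ε := by simp only [hΔ₀def] at htΔ ⊢; linarith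
    have hintnn : 0 ≤ ∫ s in Δ₀..t, ‖x' s‖^2 :=
      intervalIntegral.integral_nonneg ht0 (fun s _ => sq_nonneg _)
    have hcs2 : (∫ s in Δ₀..t, ‖x' s‖)^2 ≤ ε * E Δ := by
      calc (∫ s in Δ₀..t, ‖x' s‖)^2 ≤ (t - Δ₀) * ∫ s in Δ₀..t, ‖x' s‖^2 := hcs
        _ ≤ ε * ∫ s in Δ₀..t, ‖x' s‖^2 := mul_le_mul_of_nonneg_right htε hintnn
        _ ≤ ε * E Δ := by
            apply mul_le_mul_of_nonneg_left _ hεpos.le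
            rw [hEt]; linarith
    have htri : ‖x t‖ ≤ ‖x Δ₀‖ + ∫ s in Δ₀..t, ‖x' s‖ := by
      have hna := norm_add_le (x Δ₀) (x t - x Δ₀)
      rw [show x Δ₀ + (x t - x Δ₀) = x t from by abel] at hna
      linarith
    have hIn : 0 ≤ ∫ s in Δ₀..t, ‖x' s‖ :=
      intervalIntegral.integral_nonneg ht0 (fun s _ => norm_nonneg _)
    simp only [hBdef]
    nlinarith [norm_nonneg (x t), norm_nonneg (x Δ₀), sq_nonneg (‖x Δ₀‖ - ∫ s in Δ₀..t, ‖x' s‖)]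
  -- constant
  set C₀ : ℝ := ∫ s in (0:ℝ)..Δ₀, ‖x s‖^2 with hC₀def
  set C : ℝ := R*C₀ + R*ε*B + K*B with hCdef
  -- main eventual inequality
  have hev : ∀ᶠ Δ in nhdsWithin Δinf (Set.Iio Δinf),
      E Δ / 2 - C ≤ (E Δ) - R * (∫ s in (0:ℝ)..Δ, ‖x s‖^2) - K * ‖x Δ‖^2 := by
    filter_upwards [Ioo_mem_nhdsLT hΔ₀lt] with Δ hΔ
    obtain ⟨hΔ1, hΔ2⟩ := hΔ
    have hΔ1' : Δ₀ ≤ Δ := hΔ1.le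
    have hΔ0 : 0 ≤ Δ := le_trans hΔ₀pos.le hΔ1'
    have hEΔnn : 0 ≤ E Δ := hEnonneg Δ hΔ0 hΔ2
    have hBnn : 0 ≤ B := by simp only [hBdef]; positivity
    -- split integral of ‖x‖²
    have hsplit := intervalIntegral.integral_add_adjacent_intervals
      (hxsqint Δ₀ hΔ₀pos.le hΔ₀lt)
      (((hxsqint Δ hΔ0 hΔ2).mono_set (by
        rw [Set.uIcc_of_le hΔ1', Set.uIcc_of_le hΔ0]
        exact Set.Icc_subset_Icc hΔ₀pos.le le_rfl)))
    -- bound middle integral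
    have hmid : (∫ s in Δ₀..Δ, ‖x s‖^2) ≤ (Δ - Δ₀) * (B + 2*ε*(E Δ)) := by
      have hb : (∫ s in Δ₀..Δ, ‖x s‖^2) ≤ ∫ _s in Δ₀..Δ, (B + 2*ε*(E Δ)) := by
        apply intervalIntegral.integral_mono_on hΔ1'
          ((hxsqint Δ hΔ0 hΔ2).mono_set (by
            rw [Set.uIcc_of_le hΔ1', Set.uIcc_of_le hΔ0]
            exact Set.Icc_subset_Icc hΔ₀pos.le le_rfl))
          intervalIntegrable_const
        intro t ht
        exact hkey Δ hΔ1' hΔ2 t ht.1 ht.2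
      rwa [intervalIntegral.integral_const, smul_eq_mul] at hb
    have hΔε : Δ - Δ₀ ≤ ε := by simp only [hΔ₀def] at hΔ2 ⊢; linarith
    have hmid2 : (∫ s in Δ₀..Δ, ‖x s‖^2) ≤ ε * (B + 2*ε*(E Δ)) := by
      calc (∫ s in Δ₀..Δ, ‖x s‖^2) ≤ (Δ - Δ₀) * (B + 2*ε*(E Δ)) := hmid
        _ ≤ ε * (B + 2*ε*(E Δ)) := by
            apply mul_le_mul_of_nonneg_right hΔε
            have := mul_nonneg (by linarith : (0:ℝ) ≤ 2*ε) hEΔnn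
            linarith
    have hfull : (∫ s in (0:ℝ)..Δ, ‖x s‖^2) ≤ C₀ + ε * (B + 2*ε*(E Δ)) := by
      rw [← hsplit]; simp only [hC₀def]; linarith
    have hend : ‖x Δ‖^2 ≤ B + 2*ε*(E Δ) := hkey Δ hΔ1' hΔ2 Δ hΔ1' le_rfl
    -- coefficient bound: 2Rε² + 2Kε ≤ 1/2
    have hcoef : 2*R*ε^2 + 2*K*ε ≤ 1/2 := by
      have h1 : ε ≤ Δinf := by linarith
      have h2 : R*ε ≤ R*Δinf := mul_le_mul_of_nonneg_left h1 hR.le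
      have h3 : ε * (4*(R*Δinf+K)) ≤ 1 := by
        rw [← le_div_iff₀ (by positivity)]
        exact hε2
      nlinarith [mul_le_mul_of_nonneg_left h2 hεpos.le, h3, hεpos]
    have hA1 : R * (∫ s in (0:ℝ)..Δ, ‖x s‖^2) ≤ R*C₀ + R*ε*B + 2*R*ε^2*(E Δ) := by
      nlinarith [mul_le_mul_of_nonneg_left hfull hR.le]
    have hA2 : K * ‖x Δ‖^2 ≤ K*B + 2*K*ε*(E Δ) := by
      nlinarith [mul_le_mul_of_nonneg_left hend hK.le]
    have hA3 : 2*R*ε^2*(E Δ) + 2*K*ε*(E Δ) ≤ (1/2) * E Δ := by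
      nlinarith [mul_le_mul_of_nonneg_right hcoef hEΔnn]
    simp only [hCdef]
    linarith
  -- conclude
  have hg : Tendsto (fun Δ => E Δ / 2 - C) (nhdsWithin Δinf (Set.Iio Δinf)) atTop := by
    apply tendsto_atTop_add_const_right
    exact hdiv.atTop_div_const (by norm_num)
  exact tendsto_atTop_mono' _ hev hg
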